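/- Let V₁ and V₂ be disjoint finite sets, Σ a finite alphabet, and for each w ∈ V₁ ∪ V₂ let L_w ⊆ Σ be a nonempty finite set of labels. Let F be a finite set of constraint edges, where each f ∈ F has endpoints u_f ∈ V₁ and v_f ∈ V₂ and a projection π_f : Σ → Σ, and suppose that for each f ∈ F there exist a ∈ L_{u_f} and b ∈ L_{v_f} with π_f(a) = b. Then there exists a labeling φ with φ(w) ∈ L_w for every w ∈ V₁ ∪ V₂ such that the number of f ∈ F with π_f(φ(u_f)) = φ(v_f) is at least Σ_{f∈F} 1/(|L_{u_f}|·|L_{v_f}|). In particular, if every f ∈ F satisfies |L_{u_f}| ≤ ℓ/2 and |L_{v_f}| ≤ ℓ/2, then φ satisfies at least (4/ℓ²)·|F| of the edges of F. -/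
import Mathlib

open Finset

/-- Counting lemma: fixing the value at one coordinate divides the count of
labelings by the size of that coordinate's label set. -/
lemma key_count {V A : Type} [Fintype V] [DecidableEq V] [DecidableEq A]
    (L : V → Finset A) (w₀ : V) {a : A} (ha : a ∈ L w₀) :
    (Fintype.piFinset L).card =
      (L w₀).card * ({φ ∈ Fintype.piFinset L | φ w₀ = a}).card := by
  rw [Fintype.card_filter_piFinset_eq_of_mem L w₀ ha, Fintype.card_piFinset,
    ← Finset.mul_prod_erase univ _ (mem_univ w₀)]

theorem stmt_4 {V₁ V₂ A ι : Type} [Fintype V₁] [Fintype V₂] [Fintype A]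
    [DecidableEq A]
    (L₁ : V₁ → Finset A) (L₂ : V₂ → Finset A)
    (hL₁ : ∀ w, (L₁ w).Nonempty) (hL₂ : ∀ w, (L₂ w).Nonempty)
    (F : Finset ι) (u : ι → V₁) (v : ι → V₂) (π : ι → A → A)
    (hex : ∀ f ∈ F, ∃ a ∈ L₁ (u f), ∃ b ∈ L₂ (v f), π f a = b) :
    ∃ (φ₁ : V₁ → A) (φ₂ : V₂ → A),
      (∀ w, φ₁ w ∈ L₁ w) ∧ (∀ w, φ₂ w ∈ L₂ w) ∧
      (∑ f ∈ F, (1 : ℝ) / (((L₁ (u f)).card : ℝ) * ((L₂ (v f)).card : ℝ))) ≤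
        ((F.filter fun f => π f (φ₁ (u f)) = φ₂ (v f)).card : ℝ) ∧
      ∀ ℓ : ℝ, 0 < ℓ →
        (∀ f ∈ F, ((L₁ (u f)).card : ℝ) ≤ ℓ / 2 ∧ ((L₂ (v f)).card : ℝ) ≤ ℓ / 2) →
        4 / ℓ ^ 2 * (F.card : ℝ) ≤
          ((F.filter fun f => π f (φ₁ (u f)) = φ₂ (v f)).card : ℝ) := by
  classical
  set S₁ := Fintype.piFinset L₁ with hS₁
  set S₂ := Fintype.piFinset L₂ with hS₂
  set Ω : Finset ((V₁ → A) × (V₂ → A)) := S₁ ×ˢ S₂ with hΩ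
  have hΩne : Ω.Nonempty := by
    refine Finset.Nonempty.product ?_ ?_ <;>
      exact Fintype.piFinset_nonempty.2 (by intro w; first | exact hL₁ w | exact hL₂ w)
  set T : ℝ := ∑ f ∈ F, (1 : ℝ) / (((L₁ (u f)).card : ℝ) * ((L₂ (v f)).card : ℝ)) with hT
  -- key: for each f ∈ F, Ω.card * (1/(c₁c₂)) ≤ #(satisfying pairs)
  have hkey : ∀ f ∈ F, (Ω.card : ℝ) *
      (1 / (((L₁ (u f)).card : ℝ) * ((L₂ (v f)).card : ℝ))) ≤
      ((Ω.filter fun p => π f (p.1 (u f)) = p.2 (v f)).card : ℝ) := by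
    intro f hf
    obtain ⟨a, ha, b, hb, hab⟩ := hex f hf
    have hsub : ((S₁.filter fun φ₁ => φ₁ (u f) = a) ×ˢ
        (S₂.filter fun φ₂ => φ₂ (v f) = b)) ⊆
        Ω.filter fun p => π f (p.1 (u f)) = p.2 (v f) := by
      intro p hp
      rw [Finset.mem_product] at hp
      obtain ⟨h1, h2⟩ := hp
      rw [Finset.mem_filter] at h1 h2 ⊢
      exact ⟨Finset.mem_product.2 ⟨h1.1, h2.1⟩, by rw [h1.2, h2.2, hab]⟩
    have hcard : (S₁.filter fun φ₁ => φ₁ (u f) = a).card *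
        (S₂.filter fun φ₂ => φ₂ (v f) = b).card ≤
        (Ω.filter fun p => π f (p.1 (u f)) = p.2 (v f)).card := by
      rw [← Finset.card_product]
      exact Finset.card_le_card hsub
    have h1 := key_count L₁ (u f) ha
    have h2 := key_count L₂ (v f) hb
    have hΩc : Ω.card = (L₁ (u f)).card * (L₂ (v f)).card *
        ((S₁.filter fun φ₁ => φ₁ (u f) = a).card *
         (S₂.filter fun φ₂ => φ₂ (v f) = b).card) := by
      rw [hΩ, Finset.card_product, h1, h2]; ring
    have hc₁ : (0:ℝ) < ((L₁ (u f)).card : ℝ) := by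
      exact_mod_cast Finset.card_pos.2 (hL₁ (u f))
    have hc₂ : (0:ℝ) < ((L₂ (v f)).card : ℝ) := by
      exact_mod_cast Finset.card_pos.2 (hL₂ (v f))
    rw [hΩc]
    push_cast
    rw [mul_one_div, mul_div_cancel_left₀ _ (by positivity)]
    exact_mod_cast hcard
  -- sum over Ω of the satisfied-count
  have hswap : ∑ p ∈ Ω, ((F.filter fun f => π f (p.1 (u f)) = p.2 (v f)).card : ℝ)
      = ∑ f ∈ F, ((Ω.filter fun p => π f (p.1 (u f)) = p.2 (v f)).card : ℝ) := by
    simp only [Finset.card_filter]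
    push_cast
    rw [Finset.sum_comm]
  have hsum : ∑ p ∈ Ω, T ≤
      ∑ p ∈ Ω, ((F.filter fun f => π f (p.1 (u f)) = p.2 (v f)).card : ℝ) := by
    rw [hswap, Finset.sum_const, nsmul_eq_mul, hT, Finset.mul_sum]
    exact Finset.sum_le_sum hkey
  obtain ⟨p, hp, hple⟩ := Finset.exists_le_of_sum_le hΩne hsum
  rw [hΩ, Finset.mem_product] at hp
  refine ⟨p.1, p.2, fun w => Fintype.mem_piFinset.1 hp.1 w,
    fun w => Fintype.mem_piFinset.1 hp.2 w, hple, ?_⟩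
  intro ℓ hℓ hb
  refine le_trans ?_ hple
  rw [hT]
  have : (4 / ℓ ^ 2) * (F.card : ℝ) = ∑ f ∈ F, (4 / ℓ ^ 2 : ℝ) := by
    rw [Finset.sum_const, nsmul_eq_mul, mul_comm]
  rw [this]
  refine Finset.sum_le_sum fun f hf => ?_
  obtain ⟨h1, h2⟩ := hb f hf
  have hc₁ : (0:ℝ) < ((L₁ (u f)).card : ℝ) := by
    exact_mod_cast Finset.card_pos.2 (hL₁ (u f))
  have hc₂ : (0:ℝ) < ((L₂ (v f)).card : ℝ) := by
    exact_mod_cast Finset.card_pos.2 (hL₂ (v f))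
  have h4 : (4 : ℝ) / ℓ ^ 2 = 1 / ((ℓ/2) * (ℓ/2)) := by
    field_simp; ring
  rw [h4]
  apply one_div_le_one_div_of_le (by positivity)
  exact mul_le_mul h1 h2 hc₂.le (by linarith)
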